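/- Let W be a complex subspace of V_ℂ with dim_ℂ W = n that is totally isotropic for b_ℂ (i.e. b_ℂ(z,z') = 0 for all z, z' ∈ W) and contains no nonzero real vector. Then there exists a unique complex structure I on V that is an isometry of b (i.e. b(I v, I w) = b(v,w) for all v, w) and satisfies W = {z ∈ V_ℂ : I_ℂ z = −i·z}. -/

import Mathlib

open Module TensorProduct

/- auxiliary -/

namespace Stmt14
variable {V : Type*} [AddCommGroup V] [Module ℝ V]

noncomputable def reM : (ℂ ⊗[ℝ] V) →ₗ[ℝ] V :=
  TensorProduct.lift ((LinearMap.lsmul ℝ V).comp Complex.reLm)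

noncomputable def imM : (ℂ ⊗[ℝ] V) →ₗ[ℝ] V :=
  TensorProduct.lift ((LinearMap.lsmul ℝ V).comp Complex.imLm)

@[simp] lemma reM_tmul (c : ℂ) (v : V) : reM (c ⊗ₜ[ℝ] v) = c.re • v := rfl
@[simp] lemma imM_tmul (c : ℂ) (v : V) : imM (c ⊗ₜ[ℝ] v) = c.im • v := rfl

noncomputable def sR : (ℂ ⊗[ℝ] V) →ₗ[ℝ] (ℂ ⊗[ℝ] V) :=
  TensorProduct.map Complex.conjAe.toLinearMap LinearMap.id

@[simp] lemma sR_tmul (c : ℂ) (v : V) : sR (c ⊗ₜ[ℝ] v) = (starRingEnd ℂ) c ⊗ₜ[ℝ] v := rfl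

lemma sR_sR (z : ℂ ⊗[ℝ] V) : sR (sR z) = z := by
  induction z using TensorProduct.induction_on with
  | zero => simp
  | tmul c v => simp
  | add x y hx hy => simp [map_add, hx, hy]

lemma sR_smul (c : ℂ) (z : ℂ ⊗[ℝ] V) : sR (c • z) = (starRingEnd ℂ) c • sR z := by
  induction z using TensorProduct.induction_on with
  | zero => simp
  | tmul c' v => simp [TensorProduct.smul_tmul', smul_eq_mul, map_mul]
  | add x y hx hy => simp [smul_add, map_add, hx, hy]

lemma decompEq :
    ((TensorProduct.mk ℝ ℂ V 1) ∘ₗ reM) + ((TensorProduct.mk ℝ ℂ V Complex.I) ∘ₗ imM)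
      = LinearMap.id := by
  apply TensorProduct.ext'
  intro c v
  simp only [LinearMap.add_apply, LinearMap.comp_apply, reM_tmul, imM_tmul,
    TensorProduct.mk_apply, LinearMap.id_apply]
  rw [TensorProduct.tmul_smul, TensorProduct.tmul_smul, TensorProduct.smul_tmul',
    TensorProduct.smul_tmul', ← TensorProduct.add_tmul]
  congr 1
  simp [Complex.real_smul, Complex.ext_iff]

lemma decomp (z : ℂ ⊗[ℝ] V) :
    z = (1 : ℂ) ⊗ₜ[ℝ] reM z + Complex.I ⊗ₜ[ℝ] imM z := by
  conv_lhs => rw [← LinearMap.id_apply (R := ℝ) z, ← decompEq]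
  rfl

lemma reM_sR (z : ℂ ⊗[ℝ] V) : reM (sR z) = reM z := by
  induction z using TensorProduct.induction_on with
  | zero => simp
  | tmul c v => simp
  | add x y hx hy => simp [map_add, hx, hy]

lemma imM_sR (z : ℂ ⊗[ℝ] V) : imM (sR z) = -imM z := by
  induction z using TensorProduct.induction_on with
  | zero => simp
  | tmul c v => simp
  | add x y hx hy => simp [map_add, hx, hy]; abel

lemma real_of_fixed {z : ℂ ⊗[ℝ] V} (h : sR z = z) : z = (1 : ℂ) ⊗ₜ[ℝ] reM z := by
  have h2 : imM z = 0 := by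
    have : imM z = -imM z := by conv_lhs => rw [← h, imM_sR]
    have h3 : (2:ℝ) • imM z = 0 := by
      rw [two_smul]; nth_rewrite 1 [this]; exact neg_add_cancel _
    rcases smul_eq_zero.mp h3 with h4 | h4
    · norm_num at h4
    · exact h4
  conv_lhs => rw [decomp z]
  rw [h2, TensorProduct.tmul_zero, add_zero]

lemma tmul_one_inj {x y : V} (h : (1 : ℂ) ⊗ₜ[ℝ] x = (1 : ℂ) ⊗ₜ[ℝ] y) : x = y := by
  have := congrArg reM h
  simpa using this

noncomputable def sL : (ℂ ⊗[ℝ] V) →ₛₗ[starRingEnd ℂ] (ℂ ⊗[ℝ] V) :=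
  { toFun := sR
    map_add' := map_add sR
    map_smul' := sR_smul }

@[simp] lemma sL_apply (z : ℂ ⊗[ℝ] V) : sL z = sR z := rfl

lemma sR_baseChange (f : V →ₗ[ℝ] V) (z : ℂ ⊗[ℝ] V) :
    sR (LinearMap.baseChange ℂ f z) = LinearMap.baseChange ℂ f (sR z) := by
  induction z using TensorProduct.induction_on with
  | zero => simp
  | tmul c v => simp
  | add x y hx hy => simp [map_add, hx, hy]

end Stmt14

set_option maxHeartbeats 1000000 in
/-- Let `V` be a real vector space with `dim_ℝ V = 2n` and `b` a
nondegenerate symmetric bilinear form on `V`, with `ℂ`-bilinear extension `bC` to the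
complexification `ℂ ⊗_ℝ V`.  Let `W` be a complex subspace of `ℂ ⊗_ℝ V` with
`dim_ℂ W = n` that is totally isotropic for `bC` and contains no nonzero real vector.
Then there exists a unique complex structure `I` on `V` (`I ∘ I = −id`) that is an
isometry of `b` and satisfies `W = {z : I_ℂ z = −i·z}`. -/
theorem existsUnique_complex_structure_of_isotropic
    (V : Type*) [AddCommGroup V] [Module ℝ V] [FiniteDimensional ℝ V]
    (n : ℕ) (hV : finrank ℝ V = 2 * n)
    (b : V →ₗ[ℝ] V →ₗ[ℝ] ℝ)
    (hb_symm : ∀ v w : V, b v w = b w v)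
    (hb_nondeg : ∀ v : V, (∀ w : V, b v w = 0) → v = 0)
    (bC : (ℂ ⊗[ℝ] V) →ₗ[ℂ] (ℂ ⊗[ℝ] V) →ₗ[ℂ] ℂ)
    (hbC : ∀ (z z' : ℂ) (v w : V), bC (z ⊗ₜ[ℝ] v) (z' ⊗ₜ[ℝ] w) = z * z' * (b v w : ℂ))
    (W : Submodule ℂ (ℂ ⊗[ℝ] V))
    (hW_dim : finrank ℂ ↥W = n)
    (hW_iso : ∀ z ∈ W, ∀ z' ∈ W, bC z z' = 0)
    (hW_real : ∀ v : V, (1 : ℂ) ⊗ₜ[ℝ] v ∈ W → v = 0) :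
    ∃! I : V →ₗ[ℝ] V,
      I ∘ₗ I = -LinearMap.id ∧
      (∀ v w : V, b (I v) (I w) = b v w) ∧
      W = Module.End.eigenspace (LinearMap.baseChange ℂ I) (-Complex.I) := by
  classical
  open Stmt14 in
  -- the conjugate subspace
  set Wb : Submodule ℂ (ℂ ⊗[ℝ] V) := Submodule.map (sL (V := V)) W with hWb_def
  have mem_Wb : ∀ z : ℂ ⊗[ℝ] V, z ∈ Wb ↔ ∃ p ∈ W, sR p = z := by
    intro z
    simp [hWb_def, Submodule.mem_map]
  have sR_mem_Wb : ∀ z ∈ W, sR z ∈ Wb := fun z hz => (mem_Wb _).mpr ⟨z, hz, rfl⟩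
  have sR_mem_W : ∀ z ∈ Wb, sR z ∈ W := by
    intro z hz
    obtain ⟨p, hp, rfl⟩ := (mem_Wb _).mp hz
    rwa [sR_sR]
  -- dimension of Wb
  have hWb_dim : finrank ℂ ↥Wb = n := by
    let jW : ↥W ≃+ ↥Wb :=
      { toFun := fun w => ⟨sR w.1, sR_mem_Wb _ w.2⟩
        invFun := fun s => ⟨sR s.1, sR_mem_W _ s.2⟩
        left_inv := fun w => Subtype.ext (sR_sR _)
        right_inv := fun s => Subtype.ext (sR_sR _)
        map_add' := fun x y => Subtype.ext (map_add sR _ _) }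
    have hrank : Module.rank ℂ ↥W = Module.rank ℂ ↥Wb := by
      refine rank_eq_of_equiv_equiv (⟨fun c => (starRingEnd ℂ) c, map_zero _⟩ : ZeroHom ℂ ℂ)
        jW ⟨fun a c h => by simpa using congrArg (starRingEnd ℂ) h,
          fun c => ⟨(starRingEnd ℂ) c, by simp⟩⟩ ?_
      intro r m
      apply Subtype.ext
      show sR ((r • m : ↥W) : ℂ ⊗[ℝ] V) = _
      exact sR_smul r m.1
    rw [← hW_dim]
    simp only [Module.finrank]
    rw [hrank]
  -- disjointness
  have hdisj : W ⊓ Wb = ⊥ := by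
    rw [eq_bot_iff]
    intro z hz
    obtain ⟨hzW, hzWb⟩ := Submodule.mem_inf.mp hz
    have hσz : sR z ∈ W := sR_mem_W _ hzWb
    -- z + sR z is fixed by sR and in W
    have hfix1 : sR (z + sR z) = z + sR z := by rw [map_add, sR_sR]; abel
    have h1 : z + sR z = 0 := by
      have hr := real_of_fixed hfix1
      have hmem : (1 : ℂ) ⊗ₜ[ℝ] reM (z + sR z) ∈ W := by rw [← hr]; exact W.add_mem hzW hσz
      rw [hr, hW_real _ hmem, TensorProduct.tmul_zero]
    have hneg : sR z = -z := by linear_combination (norm := abel) h1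
    -- I • z is fixed by sR and in W
    have hfix2 : sR (Complex.I • z) = Complex.I • z := by
      rw [sR_smul, Complex.conj_I, hneg]; simp
    have h2 : Complex.I • z = 0 := by
      have hr := real_of_fixed hfix2
      have hmem : (1 : ℂ) ⊗ₜ[ℝ] reM (Complex.I • z) ∈ W := by
        rw [← hr]; exact W.smul_mem _ hzW
      rw [hr, hW_real _ hmem, TensorProduct.tmul_zero]
    have hz0 : z = 0 := by
      rcases smul_eq_zero.mp h2 with h | h
      · exact absurd h Complex.I_ne_zero
      · exact h
    simp [hz0]
  -- codisjointness
  have hcodis : W ⊔ Wb = ⊤ := by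
    apply Submodule.eq_top_of_finrank_eq
    have hsum := Submodule.finrank_sup_add_finrank_inf_eq W Wb
    rw [hdisj, finrank_bot, add_zero, hW_dim, hWb_dim] at hsum
    rw [hsum, Module.finrank_baseChange, hV]
    ring
  have hcompl : IsCompl W Wb := ⟨disjoint_iff.mpr hdisj, codisjoint_iff.mpr hcodis⟩
  have hdecomp : ∀ z : ℂ ⊗[ℝ] V, ∃ p ∈ W, ∃ q ∈ Wb, p + q = z :=
    fun z => by
      obtain ⟨x, y, hx, hy, h⟩ := Submodule.codisjoint_iff_exists_add_eq.mp hcompl.codisjoint z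
      exact ⟨x, hx, y, hy, h⟩
  -- the candidate complexified map
  set J : (ℂ ⊗[ℝ] V) →ₗ[ℂ] (ℂ ⊗[ℝ] V) :=
    Complex.I • ((Wb.subtype ∘ₗ Wb.projectionOnto W hcompl.symm)
      - (W.subtype ∘ₗ W.projectionOnto Wb hcompl)) with hJ_def
  have hJW : ∀ z ∈ W, J z = -Complex.I • z := by
    intro z hz
    have e1 : W.projectionOnto Wb hcompl z = ⟨z, hz⟩ :=
      Submodule.projectionOnto_apply_left hcompl ⟨z, hz⟩
    have e2 : Wb.projectionOnto W hcompl.symm z = 0 :=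
      Submodule.projectionOnto_apply_right hcompl.symm ⟨z, hz⟩
    simp [hJ_def, e1, e2]
  have hJWb : ∀ z ∈ Wb, J z = Complex.I • z := by
    intro z hz
    have e1 : Wb.projectionOnto W hcompl.symm z = ⟨z, hz⟩ :=
      Submodule.projectionOnto_apply_left hcompl.symm ⟨z, hz⟩
    have e2 : W.projectionOnto Wb hcompl z = 0 :=
      Submodule.projectionOnto_apply_right hcompl ⟨z, hz⟩
    simp [hJ_def, e1, e2]
  -- J commutes with conjugation
  have hcomm : ∀ z : ℂ ⊗[ℝ] V, sR (J z) = J (sR z) := by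
    have hp : ∀ p ∈ W, sR (J p) = J (sR p) := by
      intro p hp
      rw [hJW p hp, hJWb _ (sR_mem_Wb p hp), sR_smul]
      simp [Complex.conj_I]
    have hq : ∀ q ∈ Wb, sR (J q) = J (sR q) := by
      intro q hq
      rw [hJWb q hq, hJW _ (sR_mem_W q hq), sR_smul]
      simp [Complex.conj_I]
    intro z
    obtain ⟨p, hpW, q, hqW, rfl⟩ := hdecomp z
    rw [map_add, map_add, map_add, map_add, hp p hpW, hq q hqW]
  have h1fix : ∀ v : V, sR ((1 : ℂ) ⊗ₜ[ℝ] v) = (1 : ℂ) ⊗ₜ[ℝ] v := by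
    intro v; simp
  -- J preserves real vectors up to reality
  have hJreal : ∀ v : V, J ((1 : ℂ) ⊗ₜ[ℝ] v) = (1 : ℂ) ⊗ₜ[ℝ] reM (J ((1 : ℂ) ⊗ₜ[ℝ] v)) := by
    intro v
    apply real_of_fixed
    rw [hcomm, h1fix]
  -- the real map
  set Idef : V →ₗ[ℝ] V :=
    reM ∘ₗ (J.restrictScalars ℝ) ∘ₗ (TensorProduct.mk ℝ ℂ V 1) with hIdef
  have hI1 : ∀ v : V, J ((1 : ℂ) ⊗ₜ[ℝ] v) = (1 : ℂ) ⊗ₜ[ℝ] Idef v := by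
    intro v
    rw [hIdef]
    exact hJreal v
  have hbase : LinearMap.baseChange ℂ Idef = J := by
    apply LinearMap.ext
    intro z
    induction z using TensorProduct.induction_on with
    | zero => simp
    | tmul c v =>
        have hc : c ⊗ₜ[ℝ] v = c • ((1 : ℂ) ⊗ₜ[ℝ] v) := by
          rw [TensorProduct.smul_tmul', smul_eq_mul, mul_one]
        have hc' : ∀ x : V, c ⊗ₜ[ℝ] x = c • ((1 : ℂ) ⊗ₜ[ℝ] x) := by
          intro x; rw [TensorProduct.smul_tmul', smul_eq_mul, mul_one]
        rw [LinearMap.baseChange_tmul, hc' (Idef v), hc, map_smul, hI1]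
    | add x y hx hy => simp [map_add, hx, hy]
  -- J ∘ J = -1
  have hJJ : ∀ z : ℂ ⊗[ℝ] V, J (J z) = -z := by
    intro z
    obtain ⟨p, hpW, q, hqW, rfl⟩ := hdecomp z
    have e : J (p + q) = -Complex.I • p + Complex.I • q := by
      rw [map_add, hJW p hpW, hJWb q hqW]
    rw [e, map_add, map_smul, map_smul, hJW p hpW, hJWb q hqW, smul_smul, smul_smul]
    simp [Complex.I_mul_I]
    abel
  -- property 1
  have prop1 : Idef ∘ₗ Idef = -LinearMap.id := by
    apply LinearMap.ext
    intro v
    have h := hJJ ((1 : ℂ) ⊗ₜ[ℝ] v)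
    rw [hI1 v, hI1 (Idef v), ← TensorProduct.tmul_neg] at h
    simpa using tmul_one_inj h
  -- conjugation equivariance of bC
  have hbCconj : ∀ z z' : ℂ ⊗[ℝ] V, bC (sR z) (sR z') = (starRingEnd ℂ) (bC z z') := by
    intro z z'
    induction z using TensorProduct.induction_on with
    | zero => simp
    | tmul c v =>
        induction z' using TensorProduct.induction_on with
        | zero => simp
        | tmul c' w =>
            rw [sR_tmul, sR_tmul, hbC, hbC, map_mul, map_mul, Complex.conj_ofReal]
        | add x y hx hy => simp only [map_add, hx, hy]
    | add x y hx hy => simp only [map_add, LinearMap.add_apply, hx, hy]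
  -- Wb is isotropic
  have hWb_iso : ∀ z ∈ Wb, ∀ z' ∈ Wb, bC z z' = 0 := by
    intro z hz z' hz'
    obtain ⟨p, hp, rfl⟩ := (mem_Wb _).mp hz
    obtain ⟨p', hp', rfl⟩ := (mem_Wb _).mp hz'
    rw [hbCconj, hW_iso p hp p' hp', map_zero]
  -- J is an isometry of bC
  have hJb : ∀ z z' : ℂ ⊗[ℝ] V, bC (J z) (J z') = bC z z' := by
    intro z z'
    obtain ⟨p, hpW, q, hqW, rfl⟩ := hdecomp z
    obtain ⟨p', hpW', q', hqW', rfl⟩ := hdecomp z'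
    have eL : J (p + q) = -Complex.I • p + Complex.I • q := by
      rw [map_add, hJW p hpW, hJWb q hqW]
    have eR : J (p' + q') = -Complex.I • p' + Complex.I • q' := by
      rw [map_add, hJW p' hpW', hJWb q' hqW']
    rw [eL, eR]
    have e1 : bC p p' = 0 := hW_iso p hpW p' hpW'
    have e4 : bC q q' = 0 := hWb_iso q hqW q' hqW'
    simp only [map_add, map_smul, LinearMap.add_apply, LinearMap.smul_apply, e1, e4,
      smul_eq_mul, smul_zero, mul_zero]
    linear_combination (-(bC q) p' - (bC p) q') * Complex.I_mul_I
  -- property 2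
  have prop2 : ∀ v w : V, b (Idef v) (Idef w) = b v w := by
    intro v w
    have h := hJb ((1 : ℂ) ⊗ₜ[ℝ] v) ((1 : ℂ) ⊗ₜ[ℝ] w)
    rw [hI1 v, hI1 w, hbC, hbC] at h
    simp only [one_mul] at h
    exact_mod_cast h
  -- property 3
  have prop3 : W = Module.End.eigenspace (LinearMap.baseChange ℂ Idef) (-Complex.I) := by
    rw [hbase]
    ext z
    rw [Module.End.mem_eigenspace_iff]
    constructor
    · intro hz
      rw [hJW z hz]
    · intro hz
      obtain ⟨p, hpW, q, hqW, rfl⟩ := hdecomp z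
      rw [map_add, hJW p hpW, hJWb q hqW, smul_add] at hz
      have hq0 : q = 0 := by
        have h2 : Complex.I • q = -Complex.I • q := add_left_cancel hz
        have h3 : (Complex.I - -Complex.I) • q = 0 := by
          rw [sub_smul, h2, sub_self]
        rcases smul_eq_zero.mp h3 with h | h
        · exfalso
          apply Complex.I_ne_zero
          have : (2 : ℂ) * Complex.I = 0 := by linear_combination h
          simpa using (mul_eq_zero.mp this).resolve_left two_ne_zero
        · exact h
      rw [hq0, add_zero]
      exact hpW
  refine ⟨Idef, ⟨prop1, prop2, prop3⟩, ?_⟩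
  -- uniqueness
  intro I' ⟨h1', h2', h3'⟩
  have hJ'W : ∀ z ∈ W, LinearMap.baseChange ℂ I' z = -Complex.I • z := by
    intro z hz
    rw [h3'] at hz
    exact Module.End.mem_eigenspace_iff.mp hz
  have hJ'Wb : ∀ q ∈ Wb, LinearMap.baseChange ℂ I' q = Complex.I • q := by
    intro q hq
    obtain ⟨p, hp, rfl⟩ := (mem_Wb _).mp hq
    rw [← sR_baseChange, hJ'W p hp, sR_smul]
    simp [Complex.conj_I]
  have hJ'J : ∀ z : ℂ ⊗[ℝ] V, LinearMap.baseChange ℂ I' z = J z := by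
    intro z
    obtain ⟨p, hpW, q, hqW, rfl⟩ := hdecomp z
    rw [map_add, map_add, hJ'W p hpW, hJ'Wb q hqW, hJW p hpW, hJWb q hqW]
  apply LinearMap.ext
  intro v
  apply tmul_one_inj (V := V)
  have h := hJ'J ((1 : ℂ) ⊗ₜ[ℝ] v)
  rw [hI1 v, LinearMap.baseChange_tmul] at h
  exact h
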